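/- Let M ≥ 1 be an integer, g > 1 real, and λ ∈ (0,1) with (1−λ)·g < 1. Set c̄ = 1/√(1 + (g−1)^M). Then c̄²·(g−1)^M + (1 − c̄²)·(1−λ)^M·g^M − 2·c̄·√(1 − c̄²)·(λg)^{M/2} < 0. (This is the inequality showing that, with the choice c = c̄, the Pauli-twirled state obtained after Step 3 of the entanglement distribution protocol remains distillable whenever the channel N_{g,λ} is not entanglement breaking.) -/

import Mathlib

/-- Let `M ≥ 1`, `g > 1`, `λ ∈ (0,1)` with `(1−λ)g < 1`, and set
`c̄ = 1/√(1+(g−1)^M)`. Then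
`c̄²(g−1)^M + (1−c̄²)(1−λ)^M g^M − 2c̄√(1−c̄²)(λg)^{M/2} < 0`:
with the choice `c = c̄` the Pauli-twirled state obtained after Step 3 of the
entanglement distribution protocol remains distillable whenever the channel `N_{g,λ}`
is not entanglement breaking. -/
theorem stmt5 (M : ℕ) (hM : 1 ≤ M) (g lam : ℝ) (hg : 1 < g)
    (hlam : lam ∈ Set.Ioo (0 : ℝ) 1) (hEB : (1 - lam) * g < 1)
    (cbar : ℝ) (hcbar : cbar = 1 / Real.sqrt (1 + (g - 1) ^ M)) :
    cbar ^ 2 * (g - 1) ^ M + (1 - cbar ^ 2) * (1 - lam) ^ M * g ^ M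
      - 2 * cbar * Real.sqrt (1 - cbar ^ 2) * (lam * g) ^ ((M : ℝ) / 2) < 0 := by
  obtain ⟨hl0, hl1⟩ := hlam
  have hx : (0:ℝ) < g - 1 := by linarith
  set A : ℝ := (g - 1) ^ M with hA
  have hApos : 0 < A := pow_pos hx M
  have hD : (0:ℝ) < 1 + A := by linarith
  have hsD : 0 < Real.sqrt (1 + A) := Real.sqrt_pos.mpr hD
  have hss : Real.sqrt (1 + A) * Real.sqrt (1 + A) = 1 + A :=
    Real.mul_self_sqrt hD.le
  have hc2 : cbar ^ 2 = 1 / (1 + A) := by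
    rw [hcbar, div_pow, one_pow, Real.sq_sqrt hD.le]
  have h1c2 : 1 - cbar ^ 2 = A / (1 + A) := by
    rw [hc2]; field_simp; ring
  have hsq : Real.sqrt (1 - cbar ^ 2) = Real.sqrt A / Real.sqrt (1 + A) := by
    rw [h1c2, Real.sqrt_div hApos.le]
  -- the half-power rewriting of √A
  have hsA : Real.sqrt A = (g - 1) ^ ((M : ℝ) / 2) := by
    rw [hA, Real.sqrt_eq_rpow, ← Real.rpow_natCast (g - 1) M,
      ← Real.rpow_mul hx.le, mul_one_div]
  -- key inequality
  have hB : ((1 - lam) * g) ^ M < 1 := by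
    apply pow_lt_one₀ (mul_nonneg (by linarith) (by linarith)) hEB (by omega)
  have hlt : (g - 1) ^ ((M : ℝ) / 2) < (lam * g) ^ ((M : ℝ) / 2) := by
    apply Real.rpow_lt_rpow hx.le (by nlinarith) (by positivity)
  have hkey : A + A * ((1 - lam) * g) ^ M
      - 2 * Real.sqrt A * (lam * g) ^ ((M : ℝ) / 2) < 0 := by
    have h2A : A + A * ((1 - lam) * g) ^ M < 2 * A := by nlinarith
    have hAeq : 2 * A = 2 * Real.sqrt A * Real.sqrt A := by
      rw [mul_assoc, Real.mul_self_sqrt hApos.le]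
    have hsApos : 0 < Real.sqrt A := Real.sqrt_pos.mpr hApos
    have : 2 * Real.sqrt A * Real.sqrt A
        < 2 * Real.sqrt A * (lam * g) ^ ((M : ℝ) / 2) := by
      apply mul_lt_mul_of_pos_left _ (by positivity)
      rw [hsA]; exact hlt
    linarith
  have hE : cbar ^ 2 * (g - 1) ^ M + (1 - cbar ^ 2) * (1 - lam) ^ M * g ^ M
      - 2 * cbar * Real.sqrt (1 - cbar ^ 2) * (lam * g) ^ ((M : ℝ) / 2)
      = (A + A * ((1 - lam) * g) ^ M
        - 2 * Real.sqrt A * (lam * g) ^ ((M : ℝ) / 2)) / (1 + A) := by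
    rw [hsq, h1c2, hc2, hcbar, ← hA, mul_pow]
    field_simp
    rw [Real.sq_sqrt hD.le]
    ring
  rw [hE]
  exact div_neg_of_neg_of_pos hkey hD
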